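/- Let γ ∈ ℂ \ {0} with |γ| < 1, let θ ∈ [0, 2π), set μ := ((1−|γ|²)/(4|γ|²)) e^{iθ} (so μ ≠ 0), and let c, d ∈ ℂⁿ. Then the condition 'Re(γ c̄·y + (4γμ c̄ − d)·ȳ) = 0 for every y ∈ ℂⁿ satisfying (1−|γ|²) y = 4|γ|² μ ȳ' holds if and only if every component of the vector i e^{−iθ/2}(γ̄ c + 4γμ c̄ − d) is real. -/

import Mathlib

open Matrix Complex Real

noncomputable section

namespace BergerCoburn

variable {n : ℕ}

/-- the `μ ≠ 0` case of the remark following Theorem 6.1 of the paper.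
For `0 ≠ γ`, `|γ| < 1`, `θ ∈ [0,2π)`, `μ = ((1-|γ|²)/(4|γ|²))e^{iθ}` and `c, d ∈ ℂⁿ`:
`Re(γ c̄·y + (4γμ c̄ - d)·ȳ) = 0` for every `y` with `(1-|γ|²)y = 4|γ|²μ ȳ` iff every
component of `i e^{-iθ/2}(γ̄ c + 4γμ c̄ - d)` is real. -/
theorem statement17
    (γ : ℂ) (hγ0 : γ ≠ 0) (hγ : ‖γ‖ < 1)
    (θ : ℝ) (hθ : θ ∈ Set.Ico (0 : ℝ) (2 * π))
    (μ : ℂ)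
    (hμ : μ = (((1 - ‖γ‖ ^ 2) / (4 * ‖γ‖ ^ 2) : ℝ) : ℂ)
      * Complex.exp (θ * Complex.I))
    (c d : Fin n → ℂ) :
    (∀ y : Fin n → ℂ,
      ((1 - ((‖γ‖ : ℂ)) ^ 2) • y
          = ((4 : ℂ) * ((‖γ‖ : ℂ)) ^ 2 * μ) • star y) →
        (γ * ((star c) ⬝ᵥ y) + (((4 : ℂ) * γ * μ) • star c - d) ⬝ᵥ (star y)).re = 0) ↔
    (∀ j : Fin n,
      (Complex.I * Complex.exp (-(θ * Complex.I) / 2)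
        * ((starRingEnd ℂ) γ * c j + 4 * γ * μ * (starRingEnd ℂ) (c j) - d j)).im = 0) := by
  have hr0 : (0:ℝ) < ‖γ‖ := norm_pos_iff.mpr hγ0
  set r : ℝ := ‖γ‖ with hrdef
  have hr1 : (0:ℝ) < 1 - r^2 := by nlinarith
  have hrC : (r:ℂ) ≠ 0 := by exact_mod_cast hr0.ne'
  have h1r : ((1:ℂ) - (r:ℂ)^2) ≠ 0 := by
    intro h
    have h2 : ((1 - r^2 : ℝ) : ℂ) = 0 := by push_cast; linear_combination h
    rw [Complex.ofReal_eq_zero] at h2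
    linarith
  set E : ℂ := Complex.exp (θ * Complex.I / 2) with hEdef
  have hE2 : E * E = Complex.exp (θ * Complex.I) := by
    rw [hEdef, ← Complex.exp_add]; ring_nf
  have hEconj : (starRingEnd ℂ) E = Complex.exp (-(θ * Complex.I) / 2) := by
    rw [hEdef, ← Complex.exp_conj]
    congr 1
    rw [map_div₀, _root_.map_mul, Complex.conj_ofReal, Complex.conj_I, map_ofNat]
    ring
  have hEE : E * (starRingEnd ℂ) E = 1 := by
    rw [hEconj, hEdef, ← Complex.exp_add,
      show θ * Complex.I / 2 + -(θ * Complex.I) / 2 = 0 by ring, Complex.exp_zero]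
  have hμ4 : (4:ℂ) * (r:ℂ)^2 * μ = ((1:ℂ) - (r:ℂ)^2) * (E * E) := by
    rw [hμ, hE2]
    push_cast
    field_simp
    try ring
  -- per-index translation of the RHS condition
  have hval : ∀ j : Fin n,
      (Complex.I * Complex.exp (-(θ * Complex.I) / 2)
        * ((starRingEnd ℂ) γ * c j + 4 * γ * μ * (starRingEnd ℂ) (c j) - d j)).im
      = (γ * (starRingEnd ℂ) (c j) * E
          + (4 * γ * μ * (starRingEnd ℂ) (c j) - d j) * (starRingEnd ℂ) E).re := by
    intro j
    rw [← hEconj, mul_assoc, Complex.I_mul_im]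
    have h : (starRingEnd ℂ) E * ((starRingEnd ℂ) γ * c j + 4 * γ * μ * (starRingEnd ℂ) (c j) - d j)
        = (starRingEnd ℂ) (γ * (starRingEnd ℂ) (c j) * E)
          + (4 * γ * μ * (starRingEnd ℂ) (c j) - d j) * (starRingEnd ℂ) E := by
      simp only [_root_.map_mul, Complex.conj_conj]
      ring
    rw [h, Complex.add_re, Complex.conj_re, Complex.add_re]
  constructor
  · intro H j
    rw [hval j]
    have hy : ((1:ℂ) - (r:ℂ)^2) • (Pi.single j E : Fin n → ℂ)
        = ((4:ℂ) * (r:ℂ)^2 * μ) • star (Pi.single j E : Fin n → ℂ) := by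
      funext k
      simp only [Pi.smul_apply, Pi.star_apply, smul_eq_mul]
      rcases eq_or_ne k j with rfl | hkj
      · simp only [Pi.single_eq_same]
        rw [hμ4]
        have hsE : star E = (starRingEnd ℂ) E := rfl
        rw [hsE]
        linear_combination (-((1:ℂ) - (r:ℂ)^2) * E) * hEE
      · simp [Pi.single_eq_of_ne hkj]
    have hH := H (Pi.single j E) hy
    have hstar : star (Pi.single j E : Fin n → ℂ) = Pi.single j ((starRingEnd ℂ) E) := by
      funext k
      rcases eq_or_ne k j with rfl | hkj
      · simp
      · simp [Pi.single_eq_of_ne hkj]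
    rw [hstar] at hH
    simp only [dotProduct_single, sub_dotProduct, smul_dotProduct,
      dotProduct_single, Pi.sub_apply, Pi.smul_apply, Pi.star_apply, smul_eq_mul] at hH
    have hXY : γ * (starRingEnd ℂ) (c j) * E
        + (4 * γ * μ * (starRingEnd ℂ) (c j) - d j) * (starRingEnd ℂ) E
        = γ * (star (c j) * E) + (4 * γ * μ * star (c j) - d j) * (starRingEnd ℂ) E := by
      have h1 : star (c j) = (starRingEnd ℂ) (c j) := rfl
      rw [h1]; ring
    rw [hXY]
    convert hH using 3
    try ring
  · intro H y hy
    have hyk : ∀ k, y k = E * E * (starRingEnd ℂ) (y k) := by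
      intro k
      have h1 := congrFun hy k
      simp only [Pi.smul_apply, Pi.star_apply, smul_eq_mul] at h1
      rw [hμ4] at h1
      have hs : star (y k) = (starRingEnd ℂ) (y k) := rfl
      rw [hs, mul_assoc] at h1
      exact mul_left_cancel₀ h1r h1
    have hreal : ∀ k, (starRingEnd ℂ) E * y k = (((starRingEnd ℂ) E * y k).re : ℂ) := by
      intro k
      refine (Complex.conj_eq_iff_re.mp ?_).symm
      have h1 : (starRingEnd ℂ) ((starRingEnd ℂ) E * y k) = E * (starRingEnd ℂ) (y k) := by
        simp only [_root_.map_mul, Complex.conj_conj]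
      rw [h1]
      have h2 := congrArg (starRingEnd ℂ) (hyk k)
      simp only [_root_.map_mul, Complex.conj_conj] at h2
      rw [h2]
      calc E * ((starRingEnd ℂ) E * (starRingEnd ℂ) E * y k)
          = (E * (starRingEnd ℂ) E) * ((starRingEnd ℂ) E * y k) := by ring
        _ = (starRingEnd ℂ) E * y k := by rw [hEE, one_mul]
    have hex : ∀ k, ∃ t : ℝ, y k = E * (t:ℂ)
        ∧ (starRingEnd ℂ) (y k) = (starRingEnd ℂ) E * (t:ℂ) := by
      intro k
      refine ⟨((starRingEnd ℂ) E * y k).re, ?_, ?_⟩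
      · calc y k = (E * (starRingEnd ℂ) E) * y k := by rw [hEE, one_mul]
          _ = E * ((starRingEnd ℂ) E * y k) := by ring
          _ = E * (((starRingEnd ℂ) E * y k).re : ℂ) := by rw [← hreal k]
      · have h3 : y k = E * (((starRingEnd ℂ) E * y k).re : ℂ) := by
          calc y k = (E * (starRingEnd ℂ) E) * y k := by rw [hEE, one_mul]
            _ = E * ((starRingEnd ℂ) E * y k) := by ring
            _ = E * (((starRingEnd ℂ) E * y k).re : ℂ) := by rw [← hreal k]
        have := congrArg (starRingEnd ℂ) h3
        simpa [_root_.map_mul, Complex.conj_ofReal] using this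
    choose t ht1 ht2 using hex
    have hsum : γ * ((star c) ⬝ᵥ y) + (((4 : ℂ) * γ * μ) • star c - d) ⬝ᵥ (star y)
        = ∑ k, (γ * (starRingEnd ℂ) (c k) * E
            + (4 * γ * μ * (starRingEnd ℂ) (c k) - d k) * (starRingEnd ℂ) E) * ((t k : ℝ) : ℂ) := by
      simp only [dotProduct, Pi.star_apply, Pi.sub_apply, Pi.smul_apply, smul_eq_mul,
        Finset.mul_sum]
      rw [← Finset.sum_add_distrib]
      refine Finset.sum_congr rfl fun k _ => ?_
      have h1 : star (c k) = (starRingEnd ℂ) (c k) := rfl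
      have h2 : star (y k) = (starRingEnd ℂ) (y k) := rfl
      rw [h1, h2, ht2 k, ht1 k]
      ring
    rw [hsum, Complex.re_sum]
    refine Finset.sum_eq_zero fun k _ => ?_
    have hA : (γ * (starRingEnd ℂ) (c k) * E
        + (4 * γ * μ * (starRingEnd ℂ) (c k) - d k) * (starRingEnd ℂ) E).re = 0 := by
      rw [← hval k]; exact H k
    simp [Complex.mul_re, hA]


end BergerCoburn
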